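/- For every integer n ≥ 1 and c ∈ [1/n, 1], the function p_c(y) = √(1+y²)/y - y/(2n(1+c+y²)) is a supersolution on (0,∞) of the Riccati equation (1/n) q' + q² + q/(ny) - 1 - 1/y² = 0; that is, (1/n) p_c'(y) + p_c(y)² + p_c(y)/(ny) - 1 - 1/y² ≥ 0 for all y > 0, with strict inequality when c > 1/n. -/

import Mathlib

theorem riccati_key (n : ℕ) (hn : 1 ≤ n) (c : ℝ)
    (hc : c ∈ Set.Icc (1 / (n : ℝ)) 1) (y : ℝ) (hy : 0 < y) :
      (1 / (n : ℝ)) * deriv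
          (fun z : ℝ => Real.sqrt (1 + z ^ 2) / z - z / (2 * (n : ℝ) * (1 + c + z ^ 2))) y
        + (Real.sqrt (1 + y ^ 2) / y - y / (2 * (n : ℝ) * (1 + c + y ^ 2))) ^ 2
        + (Real.sqrt (1 + y ^ 2) / y - y / (2 * (n : ℝ) * (1 + c + y ^ 2))) / ((n : ℝ) * y)
        - 1 - 1 / y ^ 2 > 0 := by
  have hn0 : (0:ℝ) < n := by exact_mod_cast hn
  obtain ⟨hc1, hc2⟩ := hc
  have hc0 : 0 < c := lt_of_lt_of_le (by positivity) hc1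
  have hm : 1 ≤ (n:ℝ) * c := by
    rw [div_le_iff₀ hn0] at hc1
    linarith [hc1]
  set s := Real.sqrt (1 + y ^ 2) with hsdef
  have h1y : (0:ℝ) < 1 + y ^ 2 := by positivity
  have hs0 : 0 < s := Real.sqrt_pos.mpr h1y
  have hs2 : s ^ 2 = 1 + y ^ 2 := Real.sq_sqrt h1y.le
  have hs1 : 1 < s := by nlinarith [hs2, sq_nonneg (s - 1)]
  have hA : (0:ℝ) < 1 + c + y ^ 2 := by positivity
  -- compute the derivative
  have h1 : HasDerivAt (fun z : ℝ => 1 + z ^ 2) (2 * y) y := by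
    simpa using ((hasDerivAt_pow 2 y).const_add 1)
  have h2 : HasDerivAt (fun z : ℝ => Real.sqrt (1 + z ^ 2)) (2 * y / (2 * s)) y :=
    h1.sqrt (by positivity)
  have h3 : HasDerivAt (fun z : ℝ => Real.sqrt (1 + z ^ 2) / z)
      ((2 * y / (2 * s) * y - s * 1) / y ^ 2) y := h2.div (hasDerivAt_id y) hy.ne'
  have h1c : HasDerivAt (fun z : ℝ => 2 * (n : ℝ) * (1 + c + z ^ 2)) (2 * (n:ℝ) * (2 * y)) y := by
    have := ((hasDerivAt_pow 2 y).const_add (1 + c)).const_mul (2 * (n:ℝ))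
    simpa [add_assoc] using this
  have h5 : HasDerivAt (fun z : ℝ => z / (2 * (n : ℝ) * (1 + c + z ^ 2)))
      ((1 * (2 * (n:ℝ) * (1 + c + y ^ 2)) - y * (2 * (n:ℝ) * (2 * y)))
        / (2 * (n:ℝ) * (1 + c + y ^ 2)) ^ 2) y :=
    (hasDerivAt_id y).div h1c (by positivity)
  have hderiv : deriv (fun z : ℝ => Real.sqrt (1 + z ^ 2) / z
      - z / (2 * (n : ℝ) * (1 + c + z ^ 2))) y
      = -1 / (s * y ^ 2) - (1 + c - y ^ 2) / (2 * (n:ℝ) * (1 + c + y ^ 2) ^ 2) := by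
    rw [HasDerivAt.deriv (f := fun z : ℝ => Real.sqrt (1 + z ^ 2) / z
      - z / (2 * (n : ℝ) * (1 + c + z ^ 2))) (h3.sub h5)]
    have e1 : (2 * y / (2 * s) * y - s * 1) / y ^ 2 = -1 / (s * y ^ 2) := by
      rw [div_eq_div_iff (by positivity) (by positivity)]
      field_simp
      linear_combination (-1) * hs2
    have e2 : (1 * (2 * (n:ℝ) * (1 + c + y ^ 2)) - y * (2 * (n:ℝ) * (2 * y)))
        / (2 * (n:ℝ) * (1 + c + y ^ 2)) ^ 2
        = (1 + c - y ^ 2) / (2 * (n:ℝ) * (1 + c + y ^ 2) ^ 2) := by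
      rw [div_eq_div_iff (by positivity) (by positivity)]
      ring
    rw [e1, e2]
  rw [hderiv]
  -- rewrite the expression in closed form
  have hsq : (s / y - y / (2 * (n:ℝ) * (1 + c + y ^ 2))) ^ 2
      = (1 + y ^ 2) / y ^ 2 - s / ((n:ℝ) * (1 + c + y ^ 2))
        + y ^ 2 / (4 * (n:ℝ) ^ 2 * (1 + c + y ^ 2) ^ 2) := by
    have e : (s / y - y / (2 * (n:ℝ) * (1 + c + y ^ 2))) ^ 2
        = s ^ 2 / y ^ 2 - s / ((n:ℝ) * (1 + c + y ^ 2))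
          + y ^ 2 / (4 * (n:ℝ) ^ 2 * (1 + c + y ^ 2) ^ 2) := by
      field_simp
      ring
    rw [e, hs2]
  have hinv : -1 / (s * y ^ 2) = -s / ((1 + y ^ 2) * y ^ 2) := by
    rw [div_eq_div_iff (by positivity) (by positivity)]
    linear_combination (y ^ 2) * hs2
  rw [hsq, hinv]
  have heq : (1 / (n:ℝ)) * (-s / ((1 + y ^ 2) * y ^ 2)
        - (1 + c - y ^ 2) / (2 * (n:ℝ) * (1 + c + y ^ 2) ^ 2))
      + ((1 + y ^ 2) / y ^ 2 - s / ((n:ℝ) * (1 + c + y ^ 2))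
          + y ^ 2 / (4 * (n:ℝ) ^ 2 * (1 + c + y ^ 2) ^ 2))
      + (s / y - y / (2 * (n:ℝ) * (1 + c + y ^ 2))) / ((n:ℝ) * y)
      - 1 - 1 / y ^ 2
      = (4 * (n:ℝ) * c * s * (1 + c + y ^ 2) + (1 + y ^ 2) * (y ^ 2 - 4 - 4 * c))
          / (4 * (n:ℝ) ^ 2 * (1 + y ^ 2) * (1 + c + y ^ 2) ^ 2) := by
    field_simp
    ring
  rw [heq]
  have hy2 : y ^ 2 = s ^ 2 - 1 := by linarith [hs2]
  apply div_pos _ (by positivity)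
  rw [hy2]
  have hquad : 0 < s ^ 2 + 5 * s - 4 := by nlinarith
  nlinarith [mul_pos hs0 (mul_pos (sub_pos.2 hs1) hquad),
    mul_nonneg (mul_nonneg hs0.le (sub_nonneg.2 hm)) hc0.le,
    mul_nonneg (mul_nonneg hs0.le (sub_nonneg.2 hm)) (sq_nonneg s),
    mul_nonneg (mul_nonneg hs0.le (sub_nonneg.2 hc2)) (sub_pos.2 hs1).le]

theorem riccati_supersolution_I (n : ℕ) (hn : 1 ≤ n) (c : ℝ)
    (hc : c ∈ Set.Icc (1 / (n : ℝ)) 1) :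
    (∀ y : ℝ, 0 < y →
      (1 / (n : ℝ)) * deriv
          (fun z : ℝ => Real.sqrt (1 + z ^ 2) / z - z / (2 * (n : ℝ) * (1 + c + z ^ 2))) y
        + (Real.sqrt (1 + y ^ 2) / y - y / (2 * (n : ℝ) * (1 + c + y ^ 2))) ^ 2
        + (Real.sqrt (1 + y ^ 2) / y - y / (2 * (n : ℝ) * (1 + c + y ^ 2))) / ((n : ℝ) * y)
        - 1 - 1 / y ^ 2 ≥ 0) ∧
    (1 / (n : ℝ) < c → ∀ y : ℝ, 0 < y →
      (1 / (n : ℝ)) * deriv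
          (fun z : ℝ => Real.sqrt (1 + z ^ 2) / z - z / (2 * (n : ℝ) * (1 + c + z ^ 2))) y
        + (Real.sqrt (1 + y ^ 2) / y - y / (2 * (n : ℝ) * (1 + c + y ^ 2))) ^ 2
        + (Real.sqrt (1 + y ^ 2) / y - y / (2 * (n : ℝ) * (1 + c + y ^ 2))) / ((n : ℝ) * y)
        - 1 - 1 / y ^ 2 > 0) := by
  refine ⟨fun y hy => le_of_lt (riccati_key n hn c hc y hy),
    fun _ y hy => riccati_key n hn c hc y hy⟩
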